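/- For a Hermitian matrix D, a vector α, and any z = E + iη with η > 0, one has |Tr((D ± αα* − z)⁻¹) − Tr((D − z)⁻¹)| ≤ 1/η. More generally, for a finite-rank Hermitian perturbation R and a matrix Q, |Tr(Q(D + R − z)⁻¹) − Tr(Q(D − z)⁻¹)| ≤ rank(R)·‖Q‖/η. -/

import Mathlib

open Matrix
variable {n : Type*} [Fintype n] [DecidableEq n]

lemma isUnit_res {D : Matrix n n ℂ} (hD : D.IsHermitian) {z : ℂ} (hz : z.im ≠ 0) :
    IsUnit (D - z • 1) := by
  have hsa : _root_.IsSelfAdjoint (toEuclideanCLM (𝕜 := ℂ) D) := by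
    rw [_root_.IsSelfAdjoint, ← map_star (toEuclideanCLM (𝕜 := ℂ))]
    exact congrArg _ hD
  have hzspec : z ∉ spectrum ℂ (toEuclideanCLM (𝕜 := ℂ) D) := fun h => hz (by
    rw [hsa.mem_spectrum_eq_re h]; simp)
  rw [spectrum.notMem_iff] at hzspec
  have h2 : IsUnit (toEuclideanCLM (𝕜 := ℂ) (D - z • 1)) := by
    have h3 : toEuclideanCLM (𝕜 := ℂ) (D - z • 1) = -(algebraMap ℂ _ z - toEuclideanCLM (𝕜 := ℂ) D) := by
      rw [map_sub, _root_.map_smul, Algebra.algebraMap_eq_smul_one, _root_.map_one, neg_sub]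
    rw [h3]
    exact hzspec.neg
  obtain ⟨u, hu⟩ := h2
  refine isUnit_iff_exists.mpr ⟨(toEuclideanCLM (𝕜 := ℂ) (n := n)).symm ↑u⁻¹, ?_, ?_⟩
  · apply EquivLike.injective (toEuclideanCLM (𝕜 := ℂ) (n := n))
    simp only [_root_.map_mul, _root_.map_one, StarAlgEquiv.apply_symm_apply, ← hu]
    exact u.mul_inv
  · apply EquivLike.injective (toEuclideanCLM (𝕜 := ℂ) (n := n))
    simp only [_root_.map_mul, _root_.map_one, StarAlgEquiv.apply_symm_apply, ← hu]
    exact u.inv_mul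

set_option linter.unusedSectionVars false

lemma trace_mul_vecMulVec (M : Matrix n n ℂ) (v w : n → ℂ) :
    (M * vecMulVec v w).trace = w ⬝ᵥ (M *ᵥ v) := by
  simp only [trace, Matrix.diag, Matrix.mul_apply, vecMulVec_apply, dotProduct, mulVec,
    Finset.mul_sum]
  apply Finset.sum_congr rfl; intros
  apply Finset.sum_congr rfl; intros
  ring

lemma vecMulVec_mulVec' (v w x : n → ℂ) : vecMulVec v w *ᵥ x = (w ⬝ᵥ x) • v := by
  ext i
  simp only [mulVec, vecMulVec_apply, dotProduct, Pi.smul_apply, smul_eq_mul, Finset.sum_mul]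
  apply Finset.sum_congr rfl; intros
  ring

lemma inv_sub_inv'' {A B : Matrix n n ℂ} (hA : IsUnit A) (hB : IsUnit B) :
    A⁻¹ - B⁻¹ = A⁻¹ * (B - A) * B⁻¹ := by
  rw [Matrix.mul_sub, Matrix.sub_mul, Matrix.mul_assoc,
    Matrix.mul_nonsing_inv _ (isUnit_iff_isUnit_det _ |>.mp hB),
    Matrix.nonsing_inv_mul _ (isUnit_iff_isUnit_det _ |>.mp hA), Matrix.mul_one, Matrix.one_mul]

lemma dot_adj (M : Matrix n n ℂ) (x y : n → ℂ) :
    star (M *ᵥ x) ⬝ᵥ y = star x ⬝ᵥ (Mᴴ *ᵥ y) := by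
  rw [star_mulVec, dotProduct_mulVec]

lemma herm_tvv (t : ℝ) (v : n → ℂ) : ((t : ℂ) • vecMulVec v (star v)).IsHermitian := by
  rw [IsHermitian, conjTranspose_smul]
  congr 1
  · simp
  · ext i j
    simp [conjTranspose_apply, vecMulVec_apply, mul_comm]

lemma key (D Q : Matrix n n ℂ) (hD : D.IsHermitian) {z : ℂ} (hz : 0 < z.im) (t : ℝ) (v : n → ℂ) :
    ‖((Q * (D + (t : ℂ) • vecMulVec v (star v) - z • 1)⁻¹).trace
      - (Q * (D - z • 1)⁻¹).trace)‖ ≤ ‖toEuclideanCLM (𝕜 := ℂ) Q‖ / z.im := by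
  set η := z.im with hη
  set P : Matrix n n ℂ := (t : ℂ) • vecMulVec v (star v) with hP
  by_cases h0 : P = 0
  · rw [h0]
    simp only [add_zero]
    rw [sub_self, norm_zero]
    positivity
  -- nontrivial case
  have ht : (t : ℂ) ≠ 0 := by rintro h; apply h0; rw [hP, h, zero_smul]
  have hv : v ≠ 0 := by
    rintro rfl; apply h0; ext i j; simp [hP, vecMulVec_apply]
  set B : Matrix n n ℂ := D - z • 1 with hB
  set A : Matrix n n ℂ := D + P - z • 1 with hA
  have hzne : z.im ≠ 0 := ne_of_gt hz
  have hBu : IsUnit B := isUnit_res hD hzne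
  have hAu : IsUnit A := by
    have : A = (D + P) - z • 1 := by rw [hA]
    rw [this]
    exact isUnit_res (hD.add (herm_tvv t v)) hzne
  set G : Matrix n n ℂ := B⁻¹ with hG
  set G' : Matrix n n ℂ := A⁻¹ with hG'
  have hBH : Bᴴ = D - (starRingEnd ℂ z) • 1 := by
    rw [hB, conjTranspose_sub, conjTranspose_smul, conjTranspose_one, hD]
    rfl
  have hBHu : IsUnit Bᴴ := by
    rw [hBH]
    exact isUnit_res hD (by simpa using hzne)
  have hGH : Gᴴ = (Bᴴ)⁻¹ := conjTranspose_nonsing_inv B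
  have hBBH : B * Bᴴ = Bᴴ * B := by
    rw [hB, hBH]
    simp only [Matrix.sub_mul, Matrix.mul_sub, smul_mul_assoc, mul_smul_comm, Matrix.one_mul,
      Matrix.mul_one, smul_sub, smul_smul, mul_comm ((starRingEnd ℂ) z) z]
    abel
  have hGGH : G * Gᴴ = Gᴴ * G := by
    rw [hG, hGH, ← Matrix.mul_inv_rev, ← Matrix.mul_inv_rev, hBBH]
  set w : n → ℂ := Gᴴ *ᵥ v with hw
  set u : n → ℂ := G *ᵥ v with hu
  set c : ℂ := star v ⬝ᵥ u with hc
  set f : ℂ := 1 + (t : ℂ) * c with hf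
  set rr : ℝ := ∑ i, Complex.normSq (w i) with hrr
  have hr : (star w ⬝ᵥ w) = (rr : ℂ) := by
    rw [hrr]
    push_cast
    apply Finset.sum_congr rfl
    intro i _
    simp [Complex.normSq_eq_conj_mul_self]
  have hrpos : 0 < rr := by
    rcases lt_or_eq_of_le (Finset.sum_nonneg fun i _ => Complex.normSq_nonneg (w i)) with h | h
    · exact h
    have hw0 : w = 0 := by
      funext i
      have := (Finset.sum_eq_zero_iff_of_nonneg (fun i _ => Complex.normSq_nonneg (w i))).mp h.symm i (Finset.mem_univ i)
      exact Complex.normSq_eq_zero.mp this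
    exfalso
    apply hv
    have : Bᴴ *ᵥ w = v := by
      rw [hw, mulVec_mulVec, hGH, Matrix.mul_nonsing_inv _ (isUnit_iff_isUnit_det _ |>.mp hBHu), one_mulVec]
    rw [← this, hw0, mulVec_zero]
  -- star u ⬝ᵥ u = rr
  have huu : (star u ⬝ᵥ u) = (rr : ℂ) := by
    calc star u ⬝ᵥ u = star v ⬝ᵥ ((Gᴴ * G) *ᵥ v) := by rw [hu, dot_adj, mulVec_mulVec]
      _ = star v ⬝ᵥ (Gᴴᴴ *ᵥ w) := by
            rw [← hGGH, ← mulVec_mulVec, conjTranspose_conjTranspose, ← hw]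
      _ = star (Gᴴ *ᵥ v) ⬝ᵥ w := (dot_adj _ _ _).symm
      _ = (rr : ℂ) := by rw [← hw, hr]
  -- subtraction of resolvents
  have hBHB : Bᴴ - B = (z - starRingEnd ℂ z) • (1 : Matrix n n ℂ) := by
    rw [hBH, hB, sub_smul]
    abel
  have hGsub : G - Gᴴ = (z - starRingEnd ℂ z) • (G * Gᴴ) := by
    rw [hG, hGH, inv_sub_inv'' hBu hBHu, hBHB]
    rw [Matrix.mul_smul, Matrix.mul_one, smul_mul_assoc]
  have hGGHr : star v ⬝ᵥ ((G * Gᴴ) *ᵥ v) = (rr : ℂ) := by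
    have e1 : (G * Gᴴ) *ᵥ v = Gᴴᴴ *ᵥ w := by
      rw [conjTranspose_conjTranspose, ← mulVec_mulVec, ← hw]
    rw [e1, ← dot_adj, ← hw, hr]
  have hcc : starRingEnd ℂ c = star v ⬝ᵥ (Gᴴ *ᵥ v) := by
    have e0 : starRingEnd ℂ c = star c := rfl
    rw [e0, hc, star_dotProduct, star_star, hu, dot_adj]
  have hcim : c - starRingEnd ℂ c = (z - starRingEnd ℂ z) * (rr : ℂ) := by
    rw [hcc, hc, ← dotProduct_sub, ← Matrix.sub_mulVec, hGsub, smul_mulVec,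
      dotProduct_smul, smul_eq_mul, hGGHr]
  have htR : (t : ℝ) ≠ 0 := fun h => ht (by exact_mod_cast h)
  have hcim2 : c.im = η * rr := by
    have him := congrArg Complex.im hcim
    simp only [Complex.sub_im, Complex.conj_im, Complex.mul_im, Complex.sub_re, Complex.conj_re,
      Complex.ofReal_im, Complex.ofReal_re, sub_self, mul_zero, add_zero, sub_neg_eq_add] at him
    rw [← hη] at him
    linarith
  have hfim : f.im = t * (η * rr) := by
    rw [hf]
    simp [Complex.add_im, Complex.mul_im, hcim2]
  have hfabs : |t| * (η * rr) ≤ ‖f‖ := by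
    have h1 : |f.im| = |t| * (η * rr) := by
      rw [hfim, abs_mul, abs_of_pos (mul_pos hz hrpos)]
    rw [← h1]
    exact Complex.abs_im_le_norm f
  have hfpos : 0 < |t| * (η * rr) := by positivity
  have hfne : f ≠ 0 := by
    intro h
    rw [h, norm_zero] at hfabs
    exact absurd (lt_of_lt_of_le hfpos hfabs) (lt_irrefl 0)
  -- Sherman–Morrison
  have hAB : A = B + P := by rw [hA, hB]; abel
  have hBuv : B *ᵥ u = v := by
    rw [hu, mulVec_mulVec, Matrix.mul_nonsing_inv _ (isUnit_iff_isUnit_det _ |>.mp hBu),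
      one_mulVec]
  have hAuv : A *ᵥ u = f • v := by
    rw [hAB, add_mulVec, hP, smul_mulVec, vecMulVec_mulVec', hBuv, ← hc, hf,
      smul_smul, add_smul, one_smul]
  have hSM : G' *ᵥ v = f⁻¹ • u := by
    have h3 : G' *ᵥ (A *ᵥ u) = u := by
      rw [mulVec_mulVec, hG', Matrix.nonsing_inv_mul _ (isUnit_iff_isUnit_det _ |>.mp hAu),
        one_mulVec]
    rw [hAuv, mulVec_smul] at h3
    rw [← h3, smul_smul, inv_mul_cancel₀ hfne, one_smul]
  have hdotG : ∀ y : n → ℂ, star v ⬝ᵥ (G *ᵥ y) = star w ⬝ᵥ y := by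
    intro y
    rw [hw, dot_adj, conjTranspose_conjTranspose]
  -- trace identity
  have hGsub' : G' - G = (-(t : ℂ)) • (G' * vecMulVec v (star v) * G) := by
    rw [hG', hG, inv_sub_inv'' hAu hBu]
    have e2 : B - A = -P := by rw [hAB]; abel
    rw [e2, hP, ← neg_smul, Matrix.mul_smul, smul_mul_assoc]
  have htr : (Q * G').trace - (Q * G).trace = -(t : ℂ) * (f⁻¹ * (star w ⬝ᵥ (Q *ᵥ u))) := by
    rw [← Matrix.trace_sub, ← Matrix.mul_sub, hGsub', Matrix.mul_smul, trace_smul, smul_eq_mul]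
    congr 1
    have e3 : Q * (G' * vecMulVec v (star v) * G) = (Q * G' * vecMulVec v (star v)) * G := by
      noncomm_ring
    have e5 : G * (Q * G' * vecMulVec v (star v)) = (G * Q * G') * vecMulVec v (star v) := by
      noncomm_ring
    rw [e3, Matrix.trace_mul_comm, e5, trace_mul_vecMulVec, ← mulVec_mulVec, ← mulVec_mulVec,
      hSM, mulVec_smul, mulVec_smul, dotProduct_smul, smul_eq_mul, hdotG]
  -- Cauchy-Schwarz bound
  set W : EuclideanSpace ℂ n := (WithLp.equiv 2 (n → ℂ)).symm w with hW
  set U : EuclideanSpace ℂ n := (WithLp.equiv 2 (n → ℂ)).symm u with hU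
  have hWn : ‖W‖ = Real.sqrt rr := by
    rw [hW, EuclideanSpace.norm_eq]
    congr 1
    rw [hrr]
    apply Finset.sum_congr rfl
    intro i _
    rw [Complex.normSq_eq_norm_sq]
    rfl
  have huu' : (∑ i, Complex.normSq (u i) : ℝ) = rr := by
    have e4 : (star u ⬝ᵥ u) = ((∑ i, Complex.normSq (u i) : ℝ) : ℂ) := by
      push_cast
      apply Finset.sum_congr rfl
      intro i _
      simp [Complex.normSq_eq_conj_mul_self]
    rw [e4] at huu
    exact_mod_cast huu
  have hUn : ‖U‖ = Real.sqrt rr := by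
    rw [hU, EuclideanSpace.norm_eq]
    rw [← huu']
    congr 1
    apply Finset.sum_congr rfl
    intro i _
    rw [Complex.normSq_eq_norm_sq]
    rfl
  have hinner : (inner ℂ W ((toEuclideanCLM (𝕜 := ℂ) Q) U) : ℂ) = star w ⬝ᵥ (Q *ᵥ u) := by
    rw [hU, hW, dotProduct_comm]
    rfl
  have hcs : ‖star w ⬝ᵥ (Q *ᵥ u)‖ ≤ ‖toEuclideanCLM (𝕜 := ℂ) Q‖ * rr := by
    rw [← hinner]
    calc ‖(inner ℂ W ((toEuclideanCLM (𝕜 := ℂ) Q) U) : ℂ)‖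
        = ‖(inner ℂ W ((toEuclideanCLM (𝕜 := ℂ) Q) U) : ℂ)‖ := rfl
      _ ≤ ‖W‖ * ‖(toEuclideanCLM (𝕜 := ℂ) Q) U‖ := norm_inner_le_norm _ _
      _ ≤ ‖W‖ * (‖toEuclideanCLM (𝕜 := ℂ) Q‖ * ‖U‖) := by
          apply mul_le_mul_of_nonneg_left ((toEuclideanCLM (𝕜 := ℂ) Q).le_opNorm U)
            (norm_nonneg W)
      _ = ‖toEuclideanCLM (𝕜 := ℂ) Q‖ * rr := by
          rw [hWn, hUn]
          rw [mul_comm (Real.sqrt rr), mul_assoc, Real.mul_self_sqrt (le_of_lt hrpos)]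
  -- final assembly
  rw [hG', hG] at htr
  rw [htr]
  have hta : |t| ≠ 0 := abs_ne_zero.mpr htR
  have hηne : η ≠ 0 := ne_of_gt hz
  have hrne : rr ≠ 0 := ne_of_gt hrpos
  calc ‖(-(t : ℂ) * (f⁻¹ * (star w ⬝ᵥ (Q *ᵥ u))))‖
      = |t| * ((‖f‖)⁻¹ * ‖star w ⬝ᵥ (Q *ᵥ u)‖) := by
        rw [norm_mul, norm_mul, norm_inv, ← Complex.ofReal_neg,
          Complex.norm_real, Real.norm_eq_abs, abs_neg]
    _ ≤ |t| * ((|t| * (η * rr))⁻¹ * (‖toEuclideanCLM (𝕜 := ℂ) Q‖ * rr)) := by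
        apply mul_le_mul_of_nonneg_left _ (abs_nonneg t)
        apply mul_le_mul _ hcs (norm_nonneg _) (by positivity)
        exact inv_anti₀ hfpos hfabs
    _ = ‖toEuclideanCLM (𝕜 := ℂ) Q‖ / η := by
        calc |t| * ((|t| * (η * rr))⁻¹ * (‖toEuclideanCLM (𝕜 := ℂ) Q‖ * rr))
            = (|t| * |t|⁻¹) * ((rr * rr⁻¹) * (‖toEuclideanCLM (𝕜 := ℂ) Q‖ * η⁻¹)) := by
              rw [mul_inv, mul_inv]
              ring
          _ = ‖toEuclideanCLM (𝕜 := ℂ) Q‖ / η := by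
              rw [mul_inv_cancel₀ hta, mul_inv_cancel₀ hrne, one_mul, one_mul, div_eq_mul_inv]

lemma herm_sum (s : Finset n) (t : n → ℝ) (vv : n → n → ℂ) :
    (∑ i ∈ s, (t i : ℂ) • vecMulVec (vv i) (star (vv i))).IsHermitian := by
  rw [IsHermitian, conjTranspose_sum]
  exact Finset.sum_congr rfl fun i _ => herm_tvv (t i) (vv i)

lemma telescope (D Q : Matrix n n ℂ) (hD : D.IsHermitian) {z : ℂ} (hz : 0 < z.im)
    (t : n → ℝ) (vv : n → n → ℂ) (s : Finset n) :
    ‖((Q * (D + (∑ i ∈ s, (t i : ℂ) • vecMulVec (vv i) (star (vv i))) - z • 1)⁻¹).trace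
        - (Q * (D - z • 1)⁻¹).trace)‖
      ≤ (s.filter (fun i => t i ≠ 0)).card * ‖toEuclideanCLM (𝕜 := ℂ) Q‖ / z.im := by
  classical
  induction s using Finset.induction_on with
  | empty =>
    simp only [Finset.sum_empty, add_zero, sub_self, norm_zero, Finset.filter_empty,
      Finset.card_empty, Nat.cast_zero, zero_mul, zero_div]
    exact le_refl 0
  | @insert a s hmem ih =>
    have hsum : (∑ i ∈ insert a s, (t i : ℂ) • vecMulVec (vv i) (star (vv i)))
        = (t a : ℂ) • vecMulVec (vv a) (star (vv a))
          + ∑ i ∈ s, (t i : ℂ) • vecMulVec (vv i) (star (vv i)) := Finset.sum_insert hmem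
    set S : Matrix n n ℂ := ∑ i ∈ s, (t i : ℂ) • vecMulVec (vv i) (star (vv i)) with hS
    have hre : D + (∑ i ∈ insert a s, (t i : ℂ) • vecMulVec (vv i) (star (vv i)))
        = (D + S) + (t a : ℂ) • vecMulVec (vv a) (star (vv a)) := by
      rw [hsum]; abel
    have hDS : (D + S).IsHermitian := hD.add (herm_sum s t vv)
    have hkey := key (D + S) Q hDS hz (t a) (vv a)
    by_cases h0 : t a = 0
    · have : (t a : ℂ) • vecMulVec (vv a) (star (vv a)) = 0 := by
        rw [h0]; push_cast; rw [zero_smul]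
      rw [hre, this, add_zero]
      rw [Finset.filter_insert, if_neg (by simpa using h0)]
      exact ih
    · rw [Finset.filter_insert, if_pos h0]
      rw [Finset.card_insert_of_notMem (fun hmm => hmem (Finset.mem_of_mem_filter a hmm))]
      calc ‖
            ((Q * (D + (∑ i ∈ insert a s, (t i : ℂ) • vecMulVec (vv i) (star (vv i)))
                - z • 1)⁻¹).trace - (Q * (D - z • 1)⁻¹).trace)‖
          ≤ ‖
              ((Q * (D + (∑ i ∈ insert a s, (t i : ℂ) • vecMulVec (vv i) (star (vv i)))
                - z • 1)⁻¹).trace - (Q * (D + S - z • 1)⁻¹).trace)‖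
            + ‖((Q * (D + S - z • 1)⁻¹).trace - (Q * (D - z • 1)⁻¹).trace)‖ := by
            have := norm_sub_le_norm_sub_add_norm_sub
              ((Q * (D + (∑ i ∈ insert a s, (t i : ℂ) • vecMulVec (vv i) (star (vv i)))
                - z • 1)⁻¹).trace)
              ((Q * (D + S - z • 1)⁻¹).trace)
              ((Q * (D - z • 1)⁻¹).trace)
            exact this
        _ ≤ ‖toEuclideanCLM (𝕜 := ℂ) Q‖ / z.im
            + (s.filter (fun i => t i ≠ 0)).card * ‖toEuclideanCLM (𝕜 := ℂ) Q‖ / z.im := by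
            apply add_le_add _ ih
            rw [hre]
            exact hkey
        _ = ((s.filter (fun i => t i ≠ 0)).card + 1 : ℕ) * ‖toEuclideanCLM (𝕜 := ℂ) Q‖ / z.im := by
            push_cast
            ring

lemma spectral_sum {R : Matrix n n ℂ} (hR : R.IsHermitian) :
    ∑ i, ((hR.eigenvalues i : ℝ) : ℂ) •
      vecMulVec (fun a => (hR.eigenvectorUnitary : Matrix n n ℂ) a i)
        (star fun a => (hR.eigenvectorUnitary : Matrix n n ℂ) a i) = R := by
  ext a b
  rw [Matrix.sum_apply]
  conv_rhs => rw [hR.spectral_theorem, Unitary.conjStarAlgAut_apply]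
  rw [Matrix.mul_apply]
  apply Finset.sum_congr rfl
  intro j _
  rw [Matrix.mul_diagonal]
  simp only [Matrix.smul_apply, vecMulVec_apply, Pi.star_apply, Matrix.star_apply,
    Function.comp_apply, smul_eq_mul, RCLike.star_def]
  rw [mul_left_comm, mul_assoc]
  rfl

/-- Rank-one and finite-rank resolvent perturbation bounds: for Hermitian `D`, a vector `α`,
and `z = E + iη` with `η > 0`, `|Tr((D ± αα* − z)⁻¹) − Tr((D − z)⁻¹)| ≤ 1/η`; and for a
finite-rank Hermitian perturbation `R` and arbitrary `Q`,
`|Tr(Q(D + R − z)⁻¹) − Tr(Q(D − z)⁻¹)| ≤ rank(R)·‖Q‖/η`. -/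
theorem statement15 {N : ℕ} (D R Q : Matrix (Fin N) (Fin N) ℂ)
    (hD : D.IsHermitian) (hR : R.IsHermitian)
    (E η : ℝ) (hη : 0 < η) (z : ℂ) (hz : z = E + η * Complex.I)
    (α : Fin N → ℂ) :
    (‖(((D + Matrix.vecMulVec α (star α) - z • 1)⁻¹).trace
        - ((D - z • 1)⁻¹).trace)‖ ≤ 1 / η)
    ∧ (‖(((D - Matrix.vecMulVec α (star α) - z • 1)⁻¹).trace
        - ((D - z • 1)⁻¹).trace)‖ ≤ 1 / η)
    ∧ ‖((Q * (D + R - z • 1)⁻¹).trace - (Q * (D - z • 1)⁻¹).trace)‖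
        ≤ (R.rank : ℝ) * ‖Matrix.toEuclideanCLM (𝕜 := ℂ) Q‖ / η := by
  have hzim : z.im = η := by simp [hz]
  have hz' : 0 < z.im := by rw [hzim]; exact hη
  have hone : ‖toEuclideanCLM (𝕜 := ℂ) (1 : Matrix (Fin N) (Fin N) ℂ)‖ ≤ 1 := by
    rw [_root_.map_one, ContinuousLinearMap.one_def]
    exact ContinuousLinearMap.norm_id_le
  refine ⟨?_, ?_, ?_⟩
  · have h1 := key D 1 hD hz' 1 α
    rw [Complex.ofReal_one, one_smul, Matrix.one_mul, Matrix.one_mul, hzim] at h1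
    refine le_trans h1 ?_
    gcongr
  · have h1 := key D 1 hD hz' (-1) α
    rw [show ((-1 : ℝ) : ℂ) = -1 by push_cast; ring, neg_smul, one_smul, ← sub_eq_add_neg,
      Matrix.one_mul, Matrix.one_mul, hzim] at h1
    refine le_trans h1 ?_
    gcongr
  · have h3 := telescope D Q hD hz' hR.eigenvalues
      (fun i => fun a => (hR.eigenvectorUnitary : Matrix (Fin N) (Fin N) ℂ) a i) Finset.univ
    rw [spectral_sum hR, hzim] at h3
    refine le_trans h3 ?_
    apply le_of_eq
    congr 2
    rw [hR.rank_eq_card_non_zero_eigs]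
    rw [Fintype.card_subtype]
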